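/- Let (Y, ν) be a measurable space with a finite measure ν, and (B_n)_{n∈ℕ} a sequence of measurable subsets of Y such that there exists a constant c > 0 with ν(B_n ∩ B_m) ≤ c·ν(B_n)·ν(B_m) for all distinct n, m. Let B_∞ = ⋂_{n∈ℕ} ⋃_{k≥n} B_k. Then ν(B_∞) > 0 if and only if the series ∑_{n=0}^∞ ν(B_n) diverges. -/

import Mathlib

open MeasureTheory Set

-- Cauchy–Schwarz step
lemma keyCS {Y : Type*} [MeasurableSpace Y] (ν : Measure Y)
    (B : ℕ → Set Y) (hB : ∀ n, MeasurableSet (B n)) (F : Finset ℕ) :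
    (∑ k ∈ F, ν (B k)) ^ 2 ≤
      ν (⋃ k ∈ F, B k) * ∑ k ∈ F, ∑ m ∈ F, ν (B k ∩ B m) := by
  set f : Y → ENNReal := fun x => ∑ k ∈ F, (B k).indicator 1 x with hf_def
  have hf : Measurable f :=
    Finset.measurable_sum F fun k _ => measurable_one.indicator (hB k)
  set U : Set Y := ⋃ k ∈ F, B k with hU_def
  have hU : MeasurableSet U := MeasurableSet.biUnion F.countable_toSet fun k _ => hB k
  have h1 : ∫⁻ x, f x ∂ν = ∑ k ∈ F, ν (B k) := by
    rw [hf_def, lintegral_finset_sum F fun k _ => measurable_one.indicator (hB k)]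
    simp [lintegral_indicator_one (hB _)]
  have h2 : ∫⁻ x, f x * f x ∂ν = ∑ k ∈ F, ∑ m ∈ F, ν (B k ∩ B m) := by
    have hfe : ∀ x, f x * f x = ∑ k ∈ F, ∑ m ∈ F, (B k ∩ B m).indicator 1 x := by
      intro x
      rw [hf_def, Finset.sum_mul_sum]
      refine Finset.sum_congr rfl fun k _ => Finset.sum_congr rfl fun m _ => ?_
      rw [Set.inter_indicator_one]; rfl
    simp_rw [hfe]
    rw [lintegral_finset_sum F fun k _ =>
      Finset.measurable_sum F fun m _ => measurable_one.indicator ((hB k).inter (hB m))]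
    refine Finset.sum_congr rfl fun k _ => ?_
    rw [lintegral_finset_sum F fun m _ => measurable_one.indicator ((hB k).inter (hB m))]
    simp [lintegral_indicator_one ((hB _).inter (hB _))]
  have hsupp : ∀ x, f x = U.indicator 1 x * f x := by
    intro x
    by_cases hx : x ∈ U
    · simp [hx]
    · have : f x = 0 := by
        rw [hf_def]
        refine Finset.sum_eq_zero fun k hk => ?_
        have : x ∉ B k := fun h => hx (Set.mem_biUnion hk h)
        simp [this]
      simp [this]
  have hconj : Real.HolderConjugate 2 2 := Real.HolderConjugate.two_two
  have CS := ENNReal.lintegral_mul_le_Lp_mul_Lq ν hconj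
    (measurable_one.indicator hU).aemeasurable hf.aemeasurable
  have hind2 : ∀ x : Y, (U.indicator 1 x : ENNReal) ^ (2 : ℝ) = U.indicator 1 x := by
    intro x
    by_cases hx : x ∈ U <;> simp [hx]
  have hintU : ∫⁻ x, (U.indicator 1 x : ENNReal) ^ (2 : ℝ) ∂ν = ν U := by
    simp_rw [hind2]; exact lintegral_indicator_one hU
  have hITF : ∫⁻ x, f x ∂ν ≤ (ν U) ^ (1 / 2 : ℝ) *
      (∫⁻ x, f x ^ (2 : ℝ) ∂ν) ^ (1 / 2 : ℝ) := by
    calc ∫⁻ x, f x ∂ν = ∫⁻ x, (fun y => U.indicator 1 y) x * f x ∂ν := by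
          simp_rw [← hsupp]
      _ ≤ (∫⁻ x, (U.indicator 1 x : ENNReal) ^ (2 : ℝ) ∂ν) ^ (1 / 2 : ℝ) *
          (∫⁻ x, f x ^ (2 : ℝ) ∂ν) ^ (1 / 2 : ℝ) := CS
      _ = _ := by rw [hintU]
  have hf2 : ∫⁻ x, f x ^ (2 : ℝ) ∂ν = ∑ k ∈ F, ∑ m ∈ F, ν (B k ∩ B m) := by
    rw [← h2]
    congr 1
    ext x
    rw [show ((2 : ℝ)) = ((2 : ℕ) : ℝ) by norm_num, ENNReal.rpow_natCast, sq]
  have sqle : (∑ k ∈ F, ν (B k)) ^ 2 ≤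
      ((ν U) ^ (1 / 2 : ℝ) * (∫⁻ x, f x ^ (2 : ℝ) ∂ν) ^ (1 / 2 : ℝ)) ^ 2 := by
    rw [← h1]; exact pow_le_pow_left' hITF 2
  calc (∑ k ∈ F, ν (B k)) ^ 2
      ≤ ((ν U) ^ (1 / 2 : ℝ) * (∫⁻ x, f x ^ (2 : ℝ) ∂ν) ^ (1 / 2 : ℝ)) ^ 2 := sqle
    _ = ν U * ∑ k ∈ F, ∑ m ∈ F, ν (B k ∩ B m) := by
        rw [mul_pow, ← ENNReal.rpow_natCast ((ν U) ^ (1/2 : ℝ)) 2,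
          ← ENNReal.rpow_natCast ((∫⁻ x, f x ^ (2 : ℝ) ∂ν) ^ (1/2 : ℝ)) 2,
          ← ENNReal.rpow_mul, ← ENNReal.rpow_mul]
        norm_num
        have hf2' : ∫⁻ x, f x ^ (2 : ℕ) ∂ν = ∑ k ∈ F, ∑ m ∈ F, ν (B k ∩ B m) := by
          simp_rw [sq]; exact h2
        first
        | rw [hf2]
        | rw [hf2']

set_option maxHeartbeats 1000000 in
theorem stmt0 {Y : Type*} [MeasurableSpace Y] (ν : Measure Y) [IsFiniteMeasure ν]
    (B : ℕ → Set Y) (hB : ∀ n, MeasurableSet (B n))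
    (c : NNReal) (hc : 0 < c)
    (hquasi : ∀ n m : ℕ, n ≠ m → ν (B n ∩ B m) ≤ (c : ENNReal) * ν (B n) * ν (B m)) :
    0 < ν (⋂ n : ℕ, ⋃ k : ℕ, ⋃ _ : n ≤ k, B k) ↔ (∑' n : ℕ, ν (B n)) = ⊤ := by
  constructor
  · -- easy direction: contrapositive, first Borel–Cantelli
    intro hpos
    by_contra htop
    have h0 : ν (Filter.limsup B Filter.atTop) = 0 :=
      measure_limsup_atTop_eq_zero htop
    rw [Filter.limsup_eq_iInf_iSup_of_nat] at h0
    simp only [Set.iInf_eq_iInter, Set.iSup_eq_iUnion] at h0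
    rw [h0] at hpos
    exact lt_irrefl 0 hpos
  · intro htop
    -- each tail union has measure ≥ (2c)⁻¹
    have tail_bound : ∀ n : ℕ, ((2 * c : NNReal) : ENNReal)⁻¹ ≤ ν (⋃ k, ⋃ _ : n ≤ k, B k) := by
      intro n
      -- find a finset of indices ≥ n with large sum
      have hRne : (∑ i ∈ Finset.range n, ν (B i)) ≠ ⊤ :=
        (ENNReal.sum_lt_top.mpr fun i _ => measure_lt_top ν (B i)).ne
      obtain ⟨H, hH⟩ : ∃ H : Finset ℕ,
          (∑ i ∈ Finset.range n, ν (B i)) + (c : ENNReal)⁻¹ < ∑ k ∈ H, ν (B k) := by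
        have hlt : (∑ i ∈ Finset.range n, ν (B i)) + (c : ENNReal)⁻¹
            < ⨆ s : Finset ℕ, ∑ k ∈ s, ν (B k) := by
          rw [← ENNReal.tsum_eq_iSup_sum, htop]
          exact ENNReal.add_lt_top.mpr ⟨hRne.lt_top,
            ENNReal.inv_lt_top.mpr (by exact_mod_cast hc)⟩
        exact lt_iSup_iff.mp hlt
      set F : Finset ℕ := H.filter (fun k => n ≤ k) with hF_def
      have hFmem : ∀ k ∈ F, n ≤ k := fun k hk => (Finset.mem_filter.mp hk).2
      have hFsum : (c : ENNReal)⁻¹ < ∑ k ∈ F, ν (B k) := by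
        have hsplit : ∑ k ∈ F, ν (B k)
            + ∑ k ∈ H.filter (fun k => ¬ n ≤ k), ν (B k) = ∑ k ∈ H, ν (B k) :=
          Finset.sum_filter_add_sum_filter_not H _ _
        have hsub : ∑ k ∈ H.filter (fun k => ¬ n ≤ k), ν (B k)
            ≤ ∑ i ∈ Finset.range n, ν (B i) :=
          Finset.sum_le_sum_of_subset (fun k hk => Finset.mem_range.mpr
            (by have := (Finset.mem_filter.mp hk).2; omega))
        have : (∑ i ∈ Finset.range n, ν (B i)) + (c : ENNReal)⁻¹
            < (∑ i ∈ Finset.range n, ν (B i)) + ∑ k ∈ F, ν (B k) := by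
          calc (∑ i ∈ Finset.range n, ν (B i)) + (c : ENNReal)⁻¹
              < ∑ k ∈ H, ν (B k) := hH
            _ = ∑ k ∈ F, ν (B k) + ∑ k ∈ H.filter (fun k => ¬ n ≤ k), ν (B k) := hsplit.symm
            _ ≤ ∑ k ∈ F, ν (B k) + ∑ i ∈ Finset.range n, ν (B i) := add_le_add_right hsub _
            _ = (∑ i ∈ Finset.range n, ν (B i)) + ∑ k ∈ F, ν (B k) := add_comm _ _
        exact (ENNReal.add_lt_add_iff_left hRne).mp this
      set T : ENNReal := ∑ k ∈ F, ν (B k) with hT_def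
      have hTne : T ≠ ⊤ := (ENNReal.sum_lt_top.mpr fun i _ => measure_lt_top ν (B i)).ne
      have hT0 : T ≠ 0 := by
        intro h; rw [h] at hFsum; exact ENNReal.not_lt_zero hFsum
      have hc' : (c : ENNReal) ≠ 0 := by exact_mod_cast hc.ne'
      have hcT : 1 ≤ (c : ENNReal) * T := by
        rw [← ENNReal.mul_inv_cancel hc' ENNReal.coe_ne_top]
        exact mul_le_mul_right hFsum.le _
      -- double sum bound
      have hD : (∑ k ∈ F, ∑ m ∈ F, ν (B k ∩ B m)) ≤ T + (c : ENNReal) * T * T := by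
        have step : ∀ k ∈ F, ∀ m ∈ F, ν (B k ∩ B m) ≤
            (if k = m then ν (B k) else 0) + (c : ENNReal) * ν (B k) * ν (B m) := by
          intro k _ m _
          by_cases h : k = m
          · subst h; simp [Set.inter_self]
          · simpa [h] using (hquasi k m h)
        calc (∑ k ∈ F, ∑ m ∈ F, ν (B k ∩ B m))
            ≤ ∑ k ∈ F, ∑ m ∈ F, ((if k = m then ν (B k) else 0)
                + (c : ENNReal) * ν (B k) * ν (B m)) := by
              exact Finset.sum_le_sum fun k hk => Finset.sum_le_sum fun m hm => step k hk m hm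
          _ = (∑ k ∈ F, ∑ m ∈ F, if k = m then ν (B k) else 0)
              + ∑ k ∈ F, ∑ m ∈ F, (c : ENNReal) * ν (B k) * ν (B m) := by
              rw [← Finset.sum_add_distrib]
              exact Finset.sum_congr rfl fun k _ => Finset.sum_add_distrib
          _ = T + (c : ENNReal) * T * T := by
              congr 1
              · rw [hT_def]
                exact Finset.sum_congr rfl fun k hk => by
                  rw [Finset.sum_ite_eq F k (fun _ => ν (B k))]; simp [hk]
              · rw [hT_def, Finset.sum_comm]
                simp_rw [← Finset.sum_mul, ← Finset.mul_sum]
      have hCS := keyCS ν B hB F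
      set U : Set Y := ⋃ k ∈ F, B k with hU_def
      have hUtail : U ⊆ ⋃ k, ⋃ _ : n ≤ k, B k := by
        intro x hx
        rcases Set.mem_iUnion₂.mp hx with ⟨k, hk, hxk⟩
        exact Set.mem_iUnion₂.mpr ⟨k, hFmem k hk, hxk⟩
      -- T^2 ≤ ν U * (T + cT²) ≤ ν U * 2cT²
      have h1 : T ^ 2 ≤ ν U * (T + (c : ENNReal) * T * T) :=
        le_trans hCS (mul_le_mul_right hD _)
      have h2 : T + (c : ENNReal) * T * T ≤ 2 * (c : ENNReal) * T ^ 2 := by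
        have : T ≤ (c : ENNReal) * T * T := by
          calc T = 1 * T := (one_mul T).symm
            _ ≤ (c : ENNReal) * T * T := mul_le_mul_left hcT T
        calc T + (c : ENNReal) * T * T ≤ (c : ENNReal) * T * T + (c : ENNReal) * T * T :=
              add_le_add_left this _
          _ = 2 * (c : ENNReal) * T ^ 2 := by ring
      have h3 : T ^ 2 ≤ ν U * (2 * (c : ENNReal) * T ^ 2) :=
        le_trans h1 (mul_le_mul_right h2 _)
      have hT2ne : T ^ 2 ≠ ⊤ := by
        simp [pow_two, ENNReal.mul_ne_top hTne hTne]
      have hT2pos : T ^ 2 ≠ 0 := by positivity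
      have h3' : T ^ 2 ≤ (ν U * (2 * (c : ENNReal))) * T ^ 2 := by
        rw [mul_assoc]; exact h3
      have h4 : 1 ≤ ν U * (2 * (c : ENNReal)) := by
        have hdiv := ENNReal.div_le_div_right h3' (T ^ 2)
        rwa [ENNReal.div_self hT2pos hT2ne, mul_div_assoc,
          ENNReal.div_self hT2pos hT2ne, mul_one] at hdiv
      have hcast : ((2 * c : NNReal) : ENNReal) = 2 * (c : ENNReal) := by push_cast; ring
      have h2c0 : (2 * (c : ENNReal)) ≠ 0 := by simp [hc']
      have h2ct : (2 * (c : ENNReal)) ≠ ⊤ := by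
        exact ENNReal.mul_ne_top (by simp) ENNReal.coe_ne_top
      have h5 : ((2 * c : NNReal) : ENNReal)⁻¹ ≤ ν U := by
        rw [hcast]
        have := mul_le_mul_right h4 (2 * (c : ENNReal))⁻¹
        rwa [mul_one, mul_comm (ν U), ← mul_assoc,
          ENNReal.inv_mul_cancel h2c0 h2ct, one_mul] at this
      exact le_trans h5 (measure_mono hUtail)
    -- continuity from above
    have hmono : Antitone fun n : ℕ => ⋃ k, ⋃ _ : n ≤ k, B k := by
      intro a b hab
      exact Set.iUnion₂_subset fun k hk => Set.subset_iUnion₂ (s := fun i (_ : a ≤ i) => B i) k (le_trans hab hk)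
    have hmeas : ∀ n : ℕ, NullMeasurableSet (⋃ k, ⋃ _ : n ≤ k, B k) ν := fun n =>
      (MeasurableSet.iUnion fun k => MeasurableSet.iUnion fun _ => hB k).nullMeasurableSet
    have heq : ν (⋂ n : ℕ, ⋃ k, ⋃ _ : n ≤ k, B k) = ⨅ n, ν (⋃ k, ⋃ _ : n ≤ k, B k) :=
      Antitone.measure_iInter hmono hmeas ⟨0, (measure_lt_top ν _).ne⟩
    rw [heq]
    refine lt_of_lt_of_le ?_ (le_iInf tail_bound)
    exact ENNReal.inv_pos.mpr ENNReal.coe_ne_top
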